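/- Let φ be affine on the reference triangle K̂ with vertices (0,0), (1,0), (0,1). Then the sum over the three edges Ê of K̂ of the arc-length integrals of (∇φ · t_Ê)² is bounded by 2(1 + √2) times the integral of |∇φ|² over K̂. -/

import Mathlib

open MeasureTheory Set

lemma triangle_vol_ge :
    (1/2 : ℝ) ≤ (volume {p : ℝ × ℝ | 0 ≤ p.1 ∧ 0 ≤ p.2 ∧ p.1 + p.2 ≤ 1}).toReal := by
  set T := {p : ℝ × ℝ | 0 ≤ p.1 ∧ 0 ≤ p.2 ∧ p.1 + p.2 ≤ 1}
  have hTsub : T ⊆ Icc (0,0) (1,1) := by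
    rintro ⟨x, y⟩ ⟨hx, hy, hxy⟩
    constructor <;> constructor <;> simp_all <;> linarith
  have hfin : volume T ≠ ⊤ :=
    ne_top_of_le_ne_top (isCompact_Icc.measure_lt_top).ne (measure_mono hTsub)
  have hR : regionBetween (fun _ : ℝ => (0:ℝ)) (fun x => 1 - x) (Ioo 0 1) ⊆ T := by
    rintro ⟨x, y⟩ ⟨hx, hy⟩
    simp only [mem_Ioo, T, mem_setOf_eq] at *
    exact ⟨le_of_lt hx.1, le_of_lt hy.1, by linarith [hy.2]⟩
  have hvolR : volume (regionBetween (fun _ : ℝ => (0:ℝ)) (fun x => 1 - x) (Ioo 0 1))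
      = ENNReal.ofReal (1/2) := by
    have hreg := volume_regionBetween_eq_lintegral (μ := volume)
      (f := fun _ : ℝ => (0:ℝ)) (g := fun x : ℝ => 1 - x) (s := Ioo 0 1)
      aemeasurable_const ((measurable_const.sub measurable_id).aemeasurable) measurableSet_Ioo
    rw [Measure.volume_eq_prod, hreg]
    simp only [Pi.sub_apply, sub_zero]
    rw [← ofReal_integral_eq_lintegral_ofReal]
    · rw [show (∫ y in Ioo (0:ℝ) 1, (1 - y)) = ∫ y in (0:ℝ)..1, (1 - y) by
        rw [intervalIntegral.integral_of_le (by norm_num), integral_Ioc_eq_integral_Ioo]]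
      rw [intervalIntegral.integral_sub intervalIntegrable_const
        intervalIntegral.intervalIntegrable_id]
      rw [integral_id, intervalIntegral.integral_const]
      norm_num
    · exact ((intervalIntegrable_const (c := (1:ℝ))).sub
        intervalIntegral.intervalIntegrable_id).1.mono_set Ioo_subset_Ioc_self
    · filter_upwards [ae_restrict_mem measurableSet_Ioo] with y hy
      simp only [Pi.zero_apply]
      linarith [hy.2]
  have hle : ENNReal.ofReal (1/2) ≤ volume T := hvolR ▸ measure_mono hR
  calc (1/2 : ℝ) = (ENNReal.ofReal (1/2)).toReal := by simp
    _ ≤ (volume T).toReal := ENNReal.toReal_mono hfin hle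

/-- Let `φ` be affine on the reference triangle `K̂` with vertices `(0,0)`, `(1,0)`,
`(0,1)` and gradient `(α, β)`. The sum over the three edges `Ê` of `K̂` of the
arc-length integrals of `(∇φ · t_Ê)²` (with the edges parametrized by arc length) is
bounded by `2 (1 + √2)` times `∫_{K̂} |∇φ|²`, where `|∇φ|² = α² + β²`. -/
theorem sum_edge_tangential_sq_le_reference (α β c : ℝ) (φ : ℝ × ℝ → ℝ)
    (hφ : φ = fun p => α * p.1 + β * p.2 + c) :
    (∫ s in (0:ℝ)..1, (deriv (fun u => φ (u, 0)) s) ^ 2)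
      + (∫ s in (0:ℝ)..1, (deriv (fun u => φ (0, u)) s) ^ 2)
      + (∫ s in (0:ℝ)..(Real.sqrt 2),
          (deriv (fun u => φ (1 - u / Real.sqrt 2, u / Real.sqrt 2)) s) ^ 2)
    ≤ 2 * (1 + Real.sqrt 2) *
        ∫ _p in {p : ℝ × ℝ | 0 ≤ p.1 ∧ 0 ≤ p.2 ∧ p.1 + p.2 ≤ 1},
          (α ^ 2 + β ^ 2) ∂volume := by
  subst hφ
  have s2 : Real.sqrt 2 > 0 := by positivity
  have s2sq : Real.sqrt 2 * Real.sqrt 2 = 2 := Real.mul_self_sqrt (by norm_num)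
  have h1 : (fun u : ℝ => α * u + β * 0 + c) = fun u => α * u + (β * 0 + c) := by
    funext u; ring
  have d1 : ∀ s : ℝ, deriv (fun u : ℝ => α * (u, (0:ℝ)).1 + β * (u, (0:ℝ)).2 + c) s = α := by
    intro s
    simp only []
    rw [show (fun u : ℝ => α * u + β * 0 + c) = fun u => α * u + (β * 0 + c) by funext u; ring]
    rw [deriv_add_const, deriv_const_mul _ differentiableAt_fun_id, deriv_id'']
    ring
  have d2 : ∀ s : ℝ, deriv (fun u : ℝ => α * ((0:ℝ), u).1 + β * ((0:ℝ), u).2 + c) s = β := by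
    intro s
    simp only []
    rw [show (fun u : ℝ => α * 0 + β * u + c) = fun u => β * u + (α * 0 + c) by funext u; ring]
    rw [deriv_add_const, deriv_const_mul _ differentiableAt_fun_id, deriv_id'']
    ring
  have d3 : ∀ s : ℝ, deriv (fun u : ℝ =>
      α * ((1 - u / Real.sqrt 2 : ℝ), (u / Real.sqrt 2 : ℝ)).1
        + β * ((1 - u / Real.sqrt 2 : ℝ), (u / Real.sqrt 2 : ℝ)).2 + c) s
      = (β - α) / Real.sqrt 2 := by
    intro s
    simp only []
    rw [show (fun u : ℝ => α * (1 - u / Real.sqrt 2) + β * (u / Real.sqrt 2) + c)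
        = fun u => ((β - α) / Real.sqrt 2) * u + (α + c) by
      funext u; field_simp; ring]
    rw [deriv_add_const, deriv_const_mul _ differentiableAt_fun_id, deriv_id'']
    ring
  simp only [d1, d2, d3, intervalIntegral.integral_const, smul_eq_mul, sub_zero]
  rw [setIntegral_const, smul_eq_mul]
  have hv := triangle_vol_ge
  have key : 1 * α ^ 2 + 1 * β ^ 2 + Real.sqrt 2 * ((β - α) / Real.sqrt 2) ^ 2
      ≤ (1 + Real.sqrt 2) * (α ^ 2 + β ^ 2) := by
    rw [div_pow, sq (Real.sqrt 2)] at *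
    rw [s2sq]
    have h : Real.sqrt 2 * ((β - α)^2 / 2) ≤ Real.sqrt 2 * (α^2 + β^2) := by
      apply mul_le_mul_of_nonneg_left _ (le_of_lt s2)
      nlinarith [sq_nonneg (α + β)]
    nlinarith
  have hnn : (0:ℝ) ≤ α ^ 2 + β ^ 2 := by positivity
  calc 1 * α ^ 2 + 1 * β ^ 2 + Real.sqrt 2 * ((β - α) / Real.sqrt 2) ^ 2
      ≤ (1 + Real.sqrt 2) * (α ^ 2 + β ^ 2) := key
    _ = 2 * (1 + Real.sqrt 2) * ((1/2) * (α ^ 2 + β ^ 2)) := by ring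
    _ ≤ 2 * (1 + Real.sqrt 2) *
        ((volume {p : ℝ × ℝ | 0 ≤ p.1 ∧ 0 ≤ p.2 ∧ p.1 + p.2 ≤ 1}).toReal * (α ^ 2 + β ^ 2)) := by
        apply mul_le_mul_of_nonneg_left _ (by positivity)
        exact mul_le_mul_of_nonneg_right hv hnn
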